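/- arXiv:0803.1749 — 2 statements merged into one kernel-verified Lean document; each statement's English description precedes it below -/
import Mathlib

section
/- (Continuity of the countable union in the completion.) For each i ≥ 1 let S_i ∈ S̃. Then lim_{n→∞} μ*( (⋃_{i=1}^∞ S_i) ∩ (⋃_{i=1}^n S_i)ᶜ ) = 0, i.e., the finite unions ⋃_{i=1}^n S_i converge to ⋃_{i=1}^∞ S_i in the pseudometric d(A,B) = μ*(A △ B). -/
open Filter Set Topology
open scoped symmDiff ENNReal

/-- `Ω` is an algebra of sets on `X`: it contains `∅` and is closed under
complements and finite unions. -/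
def IsSetAlgebraOn {X : Type*} (Ω : Set (Set X)) : Prop :=
  ∅ ∈ Ω ∧ (∀ A ∈ Ω, Aᶜ ∈ Ω) ∧ (∀ A ∈ Ω, ∀ B ∈ Ω, A ∪ B ∈ Ω)

/-- `μ` is a countably additive measure on the algebra `Ω`. -/
def IsCountablyAdditiveOn {X : Type*} (Ω : Set (Set X)) (μ : Set X → ℝ≥0∞) : Prop :=
  μ ∅ = 0 ∧ ∀ A : ℕ → Set X, (∀ i, A i ∈ Ω) → Pairwise (Function.onFun Disjoint A) →
    (⋃ i, A i) ∈ Ω → μ (⋃ i, A i) = ∑' i, μ (A i)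

/-- The outer measure induced by `μ`:
`μ*(A) = inf { ∑ μ(Cᵢ) : A ⊆ ⋃ᵢ Cᵢ, Cᵢ ∈ Ω }`. -/
noncomputable def muStar {X : Type*} (Ω : Set (Set X)) (μ : Set X → ℝ≥0∞)
    (A : Set X) : ℝ≥0∞ :=
  ⨅ (C : ℕ → Set X) (_ : ∀ i, C i ∈ Ω) (_ : A ⊆ ⋃ i, C i), ∑' i, μ (C i)

/-- A `μ`-Cauchy sequence in `Ω`: a sequence of members of `Ω` with
`μ(B n ∆ B m) → 0` as `n, m → ∞`. -/
def MuCauchy {X : Type*} (Ω : Set (Set X)) (μ : Set X → ℝ≥0∞) (B : ℕ → Set X) : Prop :=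
  (∀ n, B n ∈ Ω) ∧ Tendsto (fun p : ℕ × ℕ => μ (B p.1 ∆ B p.2)) atTop (𝓝 0)

/-- `S̃`: the collection of subsets of `X` that are limits (in the pseudometric
`d(A,B) = μ*(A ∆ B)`) of `μ`-Cauchy sequences from `Ω`. -/
def Stilde {X : Type*} (Ω : Set (Set X)) (μ : Set X → ℝ≥0∞) : Set (Set X) :=
  {S | ∃ B : ℕ → Set X, MuCauchy Ω μ B ∧
    Tendsto (fun n => muStar Ω μ (B n ∆ S)) atTop (𝓝 0)}

section Aux

variable {X : Type*} {Ω : Set (Set X)} {μ : Set X → ℝ≥0∞}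

lemma stmt10_univ_mem (hΩ : IsSetAlgebraOn Ω) : (Set.univ : Set X) ∈ Ω := by
  simpa using hΩ.2.1 _ hΩ.1

lemma stmt10_diff_mem (hΩ : IsSetAlgebraOn Ω) {A B : Set X} (hA : A ∈ Ω) (hB : B ∈ Ω) :
    A \ B ∈ Ω := by
  have h : A \ B = (Aᶜ ∪ B)ᶜ := by
    rw [Set.compl_union, compl_compl, Set.diff_eq]
  rw [h]
  exact hΩ.2.1 _ (hΩ.2.2 _ (hΩ.2.1 _ hA) _ hB)

lemma stmt10_partialSups_mem (hΩ : IsSetAlgebraOn Ω) {B : ℕ → Set X}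
    (hB : ∀ i, B i ∈ Ω) : ∀ n, (partialSups B n : Set X) ∈ Ω
  | 0 => by simpa using hB 0
  | n + 1 => by
    rw [partialSups_add_one]
    exact hΩ.2.2 _ (stmt10_partialSups_mem hΩ hB n) _ (hB (n + 1))

lemma stmt10_disjointed_mem (hΩ : IsSetAlgebraOn Ω) {B : ℕ → Set X}
    (hB : ∀ i, B i ∈ Ω) : ∀ n, disjointed B n ∈ Ω
  | 0 => by rw [disjointed_zero]; exact hB 0
  | n + 1 => by
    rw [disjointed_add_one]
    exact stmt10_diff_mem hΩ (hB (n + 1)) (stmt10_partialSups_mem hΩ hB n)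

lemma stmt10_mu_mono (hΩ : IsSetAlgebraOn Ω) (hμ : IsCountablyAdditiveOn Ω μ)
    {A B : Set X} (hA : A ∈ Ω) (hB : B ∈ Ω) (hAB : A ⊆ B) : μ A ≤ μ B := by
  set f : ℕ → Set X := fun n => if n = 0 then A else if n = 1 then B \ A else ∅ with hf
  have hU : (⋃ i, f i) = B := by
    ext x
    simp only [mem_iUnion, f]
    constructor
    · rintro ⟨i, hx⟩
      split_ifs at hx with h1 h2
      · exact hAB hx
      · exact hx.1
      · exact absurd hx (Set.notMem_empty x)
    · intro hx
      by_cases h : x ∈ A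
      · exact ⟨0, by simp [h]⟩
      · exact ⟨1, by simp [hx, h]⟩
  have hmem : ∀ i, f i ∈ Ω := by
    intro i
    simp only [f]
    split_ifs
    · exact hA
    · exact stmt10_diff_mem hΩ hB hA
    · exact hΩ.1
  have hdisj : Pairwise (Function.onFun Disjoint f) := by
    intro i j hij
    rw [Function.onFun, Set.disjoint_left]
    intro x hx hx'
    simp only [f] at hx hx'
    split_ifs at hx hx' with h1 h2 h3 h4 <;>
      first
        | exact hij (by omega)
        | exact hx
        | exact hx'
        | exact hx'.2 hx
        | exact hx.2 hx'
  have hadd := hμ.2 f hmem hdisj (hU ▸ hB)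
  calc μ A = μ (f 0) := by simp [f]
    _ ≤ ∑' i, μ (f i) := ENNReal.le_tsum 0
    _ = μ (⋃ i, f i) := hadd.symm
    _ = μ B := by rw [hU]

lemma stmt10_biUnion_lt_mem (hΩ : IsSetAlgebraOn Ω) {C : ℕ → Set X}
    (hC : ∀ i, C i ∈ Ω) : ∀ n, (⋃ i, ⋃ (_ : i < n), C i) ∈ Ω
  | 0 => by simpa using hΩ.1
  | n + 1 => by
    have h : (⋃ i, ⋃ (_ : i < n + 1), C i) = (⋃ i, ⋃ (_ : i < n), C i) ∪ C n := by
      ext x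
      simp only [mem_iUnion, Set.mem_union, Nat.lt_succ_iff_lt_or_eq]
      constructor
      · rintro ⟨i, hi | rfl, hx⟩
        · exact Or.inl ⟨i, hi, hx⟩
        · exact Or.inr hx
      · rintro (⟨i, hi, hx⟩ | hx)
        · exact ⟨i, Or.inl hi, hx⟩
        · exact ⟨n, Or.inr rfl, hx⟩
    rw [h]
    exact hΩ.2.2 _ (stmt10_biUnion_lt_mem hΩ hC n) _ (hC n)

lemma stmt10_tsum_le (hΩ : IsSetAlgebraOn Ω) (hμ : IsCountablyAdditiveOn Ω μ)
    {C : ℕ → Set X} (hC : ∀ i, C i ∈ Ω) (hd : Pairwise (Function.onFun Disjoint C)) :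
    ∑' i, μ (C i) ≤ μ Set.univ := by
  rw [ENNReal.tsum_eq_iSup_nat]
  refine iSup_le fun n => ?_
  set g : ℕ → Set X := fun i => if i < n then C i else ∅ with hg
  have hgU : (⋃ i, g i) = ⋃ i, ⋃ (_ : i < n), C i := by
    ext x
    simp only [mem_iUnion, g]
    constructor
    · rintro ⟨i, hx⟩
      by_cases h : i < n
      · exact ⟨i, h, by simpa [h] using hx⟩
      · simp [h] at hx
    · rintro ⟨i, h, hx⟩
      exact ⟨i, by simpa [h] using hx⟩
  have hgmem : ∀ i, g i ∈ Ω := by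
    intro i
    simp only [g]
    split_ifs
    · exact hC i
    · exact hΩ.1
  have hgdisj : Pairwise (Function.onFun Disjoint g) := by
    intro i j hij
    unfold Function.onFun
    by_cases hi : i < n <;> by_cases hj : j < n <;> simp [g, hi, hj, hd hij]
  have hadd := hμ.2 g hgmem hgdisj (hgU ▸ stmt10_biUnion_lt_mem hΩ hC n)
  have hsum : ∑' i, μ (g i) = ∑ i ∈ Finset.range n, μ (C i) := by
    rw [tsum_eq_sum (s := Finset.range n)
      (fun i hi => by
        simp only [Finset.mem_range, not_lt] at hi
        simp [g, Nat.not_lt.mpr hi, hμ.1])]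
    refine Finset.sum_congr rfl fun i hi => ?_
    simp only [Finset.mem_range] at hi
    simp [g, hi]
  calc ∑ i ∈ Finset.range n, μ (C i) = ∑' i, μ (g i) := hsum.symm
    _ = μ (⋃ i, g i) := hadd.symm
    _ ≤ μ Set.univ := stmt10_mu_mono hΩ hμ (hgU ▸ stmt10_biUnion_lt_mem hΩ hC n)
        (stmt10_univ_mem hΩ) (Set.subset_univ _)

open scoped Classical in
lemma stmt10_muStar_mono {A B : Set X} (h : A ⊆ B) : muStar Ω μ A ≤ muStar Ω μ B := by
  refine le_iInf fun C => le_iInf fun hC => le_iInf fun hsub => ?_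
  exact iInf_le_of_le C (iInf_le_of_le hC (iInf_le_of_le (h.trans hsub) le_rfl))

lemma stmt10_muStar_le_mu (hΩ : IsSetAlgebraOn Ω) (hμ0 : μ ∅ = 0) {A : Set X}
    (hA : A ∈ Ω) : muStar Ω μ A ≤ μ A := by
  refine iInf_le_of_le (fun i => if i = 0 then A else ∅) ?_
  refine iInf_le_of_le (fun i => by by_cases h : i = 0 <;> simp [h, hA, hΩ.1]) ?_
  refine iInf_le_of_le (fun x hx => mem_iUnion.mpr ⟨0, by simpa using hx⟩) ?_
  have h : (fun i : ℕ => μ (if i = 0 then A else ∅)) = fun i => if i = 0 then μ A else 0 := by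
    funext i; split_ifs <;> simp [hμ0]
  rw [h, tsum_ite_eq]

open scoped Classical in
lemma stmt10_muStar_eq_ofFunction (hΩ : IsSetAlgebraOn Ω) (hμ0 : μ ∅ = 0) (A : Set X) :
    muStar Ω μ A = MeasureTheory.OuterMeasure.ofFunction
      (fun B => if B ∈ Ω then μ B else ⊤) (by simp [hΩ.1, hμ0]) A := by
  set m : Set X → ℝ≥0∞ := fun B => if B ∈ Ω then μ B else ⊤ with hm
  rw [MeasureTheory.OuterMeasure.ofFunction_apply]
  apply le_antisymm
  · refine le_iInf fun C => le_iInf fun hsub => ?_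
    by_cases hC : ∀ i, C i ∈ Ω
    · refine le_trans (iInf_le_of_le C (iInf_le_of_le hC (iInf_le_of_le hsub le_rfl))) ?_
      exact le_of_eq (tsum_congr fun i => by simp [m, hC i])
    · push_neg at hC
      obtain ⟨i0, hi0⟩ := hC
      have : (∑' i, m (C i)) = ⊤ := by
        refine top_le_iff.mp (le_trans ?_ (ENNReal.le_tsum i0))
        simp [m, hi0]
      rw [this]
      exact le_top
  · refine le_iInf fun C => le_iInf fun hC => le_iInf fun hsub => ?_
    refine le_trans (iInf_le_of_le C (iInf_le_of_le hsub le_rfl)) ?_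
    exact le_of_eq (tsum_congr fun i => by simp [m, hC i])

open scoped Classical in
lemma stmt10_muStar_iUnion_le (hΩ : IsSetAlgebraOn Ω) (hμ0 : μ ∅ = 0) (A : ℕ → Set X) :
    muStar Ω μ (⋃ i, A i) ≤ ∑' i, muStar Ω μ (A i) := by
  rw [stmt10_muStar_eq_ofFunction hΩ hμ0]
  refine le_trans (MeasureTheory.measure_iUnion_le A) ?_
  exact le_of_eq (tsum_congr fun i => (stmt10_muStar_eq_ofFunction hΩ hμ0 (A i)).symm)

open scoped Classical in
lemma stmt10_muStar_union_le (hΩ : IsSetAlgebraOn Ω) (hμ0 : μ ∅ = 0) (A B : Set X) :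
    muStar Ω μ (A ∪ B) ≤ muStar Ω μ A + muStar Ω μ B := by
  rw [stmt10_muStar_eq_ofFunction hΩ hμ0, stmt10_muStar_eq_ofFunction hΩ hμ0 A,
    stmt10_muStar_eq_ofFunction hΩ hμ0 B]
  exact MeasureTheory.measure_union_le A B

end Aux

/-- continuity of the countable union in the completion. -/
theorem stmt10 {X : Type*} (Ω : Set (Set X)) (μ : Set X → ℝ≥0∞)
    (hΩ : IsSetAlgebraOn Ω) (hμ : IsCountablyAdditiveOn Ω μ) (hfin : μ Set.univ ≠ ⊤)
    (S : ℕ → Set X) (hS : ∀ i, S i ∈ Stilde Ω μ) :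
    Tendsto (fun n => muStar Ω μ ((⋃ i, S i) ∩ (⋃ i, ⋃ (_ : i ≤ n), S i)ᶜ))
      atTop (𝓝 0) := by
  rw [ENNReal.tendsto_atTop_zero]
  intro ε hε
  -- the target accuracies
  set δ : ℕ → ℝ≥0∞ := fun i => ε / 2 * 2⁻¹ ^ (i + 1) with hδdef
  have hδpos : ∀ i, 0 < δ i := by
    intro i
    refine ENNReal.mul_pos (ENNReal.div_pos hε.ne' ENNReal.ofNat_ne_top).ne' ?_
    exact (pow_ne_zero _ (ENNReal.inv_ne_zero.mpr ENNReal.ofNat_ne_top))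
  have hδsum : ∑' i, δ i = ε / 2 := by
    have h1 : ∑' i : ℕ, (2⁻¹ : ℝ≥0∞) ^ (i + 1) = 1 := by
      have : ∀ i : ℕ, (2⁻¹ : ℝ≥0∞) ^ (i + 1) = 2⁻¹ * 2⁻¹ ^ i := fun i => by
        rw [pow_succ, mul_comm]
      simp only [this]
      rw [ENNReal.tsum_mul_left, ENNReal.tsum_geometric, ENNReal.one_sub_inv_two, inv_inv]
      simp [ENNReal.inv_mul_cancel]
    simp only [hδdef]
    rw [ENNReal.tsum_mul_left, h1, mul_one]
  -- choose approximating sets B i ∈ Ω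
  have hB : ∀ i : ℕ, ∃ B ∈ Ω, muStar Ω μ (S i ∆ B) ≤ δ i := by
    intro i
    obtain ⟨B, hBC, hBlim⟩ := hS i
    obtain ⟨N, hN⟩ := ENNReal.tendsto_atTop_zero.mp hBlim (δ i) (hδpos i)
    refine ⟨B N, hBC.1 N, ?_⟩
    rw [symmDiff_comm]
    exact hN N le_rfl
  choose B hBΩ hBδ using hB
  -- disjointify
  set C : ℕ → Set X := disjointed B with hCdef
  have hCΩ : ∀ i, C i ∈ Ω := stmt10_disjointed_mem hΩ hBΩ
  have hCd : Pairwise (Function.onFun Disjoint C) := disjoint_disjointed B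
  have hCsum : ∑' i, μ (C i) ≤ μ Set.univ := stmt10_tsum_le hΩ hμ hCΩ hCd
  have hCne : ∑' i, μ (C i) ≠ ⊤ := fun h => hfin (top_le_iff.mp (h ▸ hCsum))
  -- tail of the disjointified sum goes to 0
  have htail := ENNReal.tendsto_sum_nat_add (fun i => μ (C i)) hCne
  obtain ⟨N, hN⟩ := ENNReal.tendsto_atTop_zero.mp htail (ε / 2)
    (ENNReal.div_pos hε.ne' ENNReal.ofNat_ne_top)
  refine ⟨N, fun n hn => ?_⟩
  -- the key inclusion
  have hincl : (⋃ i, S i) ∩ (⋃ i, ⋃ (_ : i ≤ n), S i)ᶜ ⊆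
      (⋃ k, C (k + (n + 1))) ∪ ⋃ i, S i ∆ B i := by
    rintro x ⟨hxT, hxn⟩
    rw [Set.mem_compl_iff] at hxn
    obtain ⟨k, hk⟩ := mem_iUnion.mp hxT
    have hnot : ∀ j ≤ n, x ∉ S j := by
      intro j hj hx
      exact hxn (mem_iUnion.mpr ⟨j, mem_iUnion.mpr ⟨hj, hx⟩⟩)
    by_cases hxB : ∃ j, x ∈ B j
    · have hxC : x ∈ ⋃ i, C i := by
        rw [hCdef, iUnion_disjointed]
        exact mem_iUnion.mpr hxB
      obtain ⟨i, hi⟩ := mem_iUnion.mp hxC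
      by_cases hin : i ≤ n
      · refine Or.inr (mem_iUnion.mpr ⟨i, ?_⟩)
        rw [Set.mem_symmDiff]
        exact Or.inr ⟨disjointed_subset B i hi, hnot i hin⟩
      · refine Or.inl (mem_iUnion.mpr ⟨i - (n + 1), ?_⟩)
        have h : i - (n + 1) + (n + 1) = i := by omega
        rw [h]
        exact hi
    · push_neg at hxB
      refine Or.inr (mem_iUnion.mpr ⟨k, ?_⟩)
      rw [Set.mem_symmDiff]
      exact Or.inl ⟨hk, hxB k⟩
  -- assemble the bound
  have h1 : muStar Ω μ (⋃ k, C (k + (n + 1))) ≤ ∑' k, μ (C (k + (n + 1))) := by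
    refine le_trans (stmt10_muStar_iUnion_le hΩ hμ.1 _) ?_
    exact ENNReal.tsum_le_tsum fun k => stmt10_muStar_le_mu hΩ hμ.1 (hCΩ _)
  have h2 : muStar Ω μ (⋃ i, S i ∆ B i) ≤ ε / 2 := by
    refine le_trans (stmt10_muStar_iUnion_le hΩ hμ.1 _) ?_
    rw [← hδsum]
    exact ENNReal.tsum_le_tsum hBδ
  calc muStar Ω μ ((⋃ i, S i) ∩ (⋃ i, ⋃ (_ : i ≤ n), S i)ᶜ)
      ≤ muStar Ω μ ((⋃ k, C (k + (n + 1))) ∪ ⋃ i, S i ∆ B i) := stmt10_muStar_mono hincl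
    _ ≤ muStar Ω μ (⋃ k, C (k + (n + 1))) + muStar Ω μ (⋃ i, S i ∆ B i) :=
        stmt10_muStar_union_le hΩ hμ.1 _ _
    _ ≤ (∑' k, μ (C (k + (n + 1)))) + ε / 2 := add_le_add h1 h2
    _ ≤ ε / 2 + ε / 2 := add_le_add (hN (n + 1) (hn.trans (Nat.le_succ n))) le_rfl
    _ = ε := ENNReal.add_halves ε
end

section
/- (Surjectivity of F.) For every S ∈ S̃ there exist a μ-Cauchy sequence {B_n} in Ω and a strictly increasing function f : ℕ → ℕ with f(n) > n for all n such that lim_{n→∞} μ*(B_n △ limsup_k B_{f(k)}) = 0 and μ*( S △ limsup_k B_{f(k)} ) = 0; that is, every element of S̃ is almost everywhere equal to the limit superior of a subsequence of a μ-Cauchy sequence of sets from Ω. -/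
open Filter Set Topology
open scoped symmDiff ENNReal

open scoped Classical in
/-- Auxiliary extension of `μ` to all sets, infinite outside `Ω`. -/
noncomputable def extMu {X : Type*} (Ω : Set (Set X)) (μ : Set X → ℝ≥0∞) : Set X → ℝ≥0∞ :=
  fun A => if A ∈ Ω then μ A else ⊤

lemma extMu_empty {X : Type*} {Ω : Set (Set X)} {μ : Set X → ℝ≥0∞}
    (hem : ∅ ∈ Ω) (hmuem : μ ∅ = 0) : extMu Ω μ ∅ = 0 := by
  simp [extMu, hem, hmuem]

lemma muStar_eq_ofFunction {X : Type*} (Ω : Set (Set X)) (μ : Set X → ℝ≥0∞)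
    (hem : ∅ ∈ Ω) (hmuem : μ ∅ = 0) (A : Set X) :
    muStar Ω μ A =
      MeasureTheory.OuterMeasure.ofFunction (extMu Ω μ) (extMu_empty hem hmuem) A := by
  rw [MeasureTheory.OuterMeasure.ofFunction_eq_iInf_mem (extMu Ω μ) (extMu_empty hem hmuem)
    (P := fun s => s ∈ Ω) (fun s hs => if_neg hs) A]
  unfold muStar
  refine iInf_congr fun C => iInf_congr_Prop Iff.rfl fun hC => iInf_congr_Prop Iff.rfl fun _ => ?_
  exact tsum_congr fun i => (if_pos (hC i)).symm

lemma muStar_mono {X : Type*} (Ω : Set (Set X)) (μ : Set X → ℝ≥0∞) {A B : Set X}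
    (h : A ⊆ B) : muStar Ω μ A ≤ muStar Ω μ B := by
  refine iInf_mono fun C => iInf_mono fun hC => ?_
  exact le_iInf fun hAB => iInf_le _ (h.trans hAB)

lemma muStar_union_le {X : Type*} (Ω : Set (Set X)) (μ : Set X → ℝ≥0∞)
    (hem : ∅ ∈ Ω) (hmuem : μ ∅ = 0) (A B : Set X) :
    muStar Ω μ (A ∪ B) ≤ muStar Ω μ A + muStar Ω μ B := by
  simp only [muStar_eq_ofFunction Ω μ hem hmuem]
  exact MeasureTheory.measure_union_le A B

lemma muStar_iUnion_le {X : Type*} (Ω : Set (Set X)) (μ : Set X → ℝ≥0∞)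
    (hem : ∅ ∈ Ω) (hmuem : μ ∅ = 0) (A : ℕ → Set X) :
    muStar Ω μ (⋃ i, A i) ≤ ∑' i, muStar Ω μ (A i) := by
  simp only [muStar_eq_ofFunction Ω μ hem hmuem]
  exact MeasureTheory.measure_iUnion_le A

/-- surjectivity of F. -/
theorem stmt13 {X : Type*} (Ω : Set (Set X)) (μ : Set X → ℝ≥0∞)
    (hΩ : IsSetAlgebraOn Ω) (hμ : IsCountablyAdditiveOn Ω μ) (hfin : μ Set.univ ≠ ⊤)
    (S : Set X) (hS : S ∈ Stilde Ω μ) :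
    ∃ B : ℕ → Set X, ∃ f : ℕ → ℕ, MuCauchy Ω μ B ∧ StrictMono f ∧ (∀ n, n < f n) ∧
      Tendsto (fun n => muStar Ω μ (B n ∆ ⋂ m, ⋃ k, ⋃ (_ : m ≤ k), B (f k)))
        atTop (𝓝 0) ∧
      muStar Ω μ (S ∆ ⋂ m, ⋃ k, ⋃ (_ : m ≤ k), B (f k)) = 0 := by
  obtain ⟨B, hB, hBS⟩ := hS
  have hem : ∅ ∈ Ω := hΩ.1
  have hmuem : μ ∅ = 0 := hμ.1
  -- choose thresholds
  have h2 : ∀ n : ℕ, ∃ N, ∀ k ≥ N, muStar Ω μ (B k ∆ S) ≤ (2 : ℝ≥0∞)⁻¹ ^ n := by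
    intro n
    have hpos : (0 : ℝ≥0∞) < (2 : ℝ≥0∞)⁻¹ ^ n :=
      ENNReal.pow_pos (ENNReal.inv_pos.mpr ENNReal.ofNat_ne_top) n
    exact (ENNReal.tendsto_nhds_zero.mp hBS _ hpos).exists_forall_of_atTop
  choose N hN using h2
  set M : ℕ → ℕ := fun n => (Finset.range (n + 1)).sup N with hM
  have hMmono : Monotone M := fun a b hab =>
    Finset.sup_mono (Finset.range_subset_range.mpr (by omega))
  set f : ℕ → ℕ := fun n => n + 1 + M n with hf
  have hfs : StrictMono f := strictMono_nat_of_lt_succ fun n => by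
    have h := hMmono (Nat.le_succ n)
    simp only [hf, Nat.succ_eq_add_one] at h ⊢; omega
  have hfgt : ∀ n, n < f n := fun n => by simp only [hf]; omega
  have hfN : ∀ n, N n ≤ f n := fun n => by
    have : N n ≤ M n := Finset.le_sup (Finset.mem_range.mpr (Nat.lt_succ_self n))
    simp only [hf]; omega
  have hfb : ∀ n, muStar Ω μ (B (f n) ∆ S) ≤ (2 : ℝ≥0∞)⁻¹ ^ n := fun n =>
    hN n (f n) (hfN n)
  set L : Set X := ⋂ m, ⋃ k, ⋃ (_ : m ≤ k), B (f k) with hL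
  -- set-theoretic inclusion
  have hsub : ∀ m, S ∆ L ⊆ ⋃ k, (B (f (m + k)) ∆ S) := by
    intro m x hx
    rw [Set.mem_symmDiff] at hx
    rcases hx with ⟨hxS, hxL⟩ | ⟨hxL, hxS⟩
    · simp only [hL, Set.mem_iInter, Set.mem_iUnion, not_forall, not_exists] at hxL
      obtain ⟨m₀, hm₀⟩ := hxL
      exact Set.mem_iUnion.2 ⟨m₀, Set.mem_symmDiff.2
        (Or.inr ⟨hxS, hm₀ (m + m₀) (Nat.le_add_left m₀ m)⟩)⟩
    · have hx2 := Set.mem_iInter.1 hxL m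
      simp only [Set.mem_iUnion] at hx2
      obtain ⟨k, hk, hxB⟩ := hx2
      refine Set.mem_iUnion.2 ⟨k - m, Set.mem_symmDiff.2 (Or.inl ⟨?_, hxS⟩)⟩
      rwa [Nat.add_sub_cancel' hk]
    -- end cases
  -- the measure-zero statement
  have hbound : ∀ m : ℕ, muStar Ω μ (S ∆ L) ≤ (2 : ℝ≥0∞)⁻¹ ^ m * 2 := by
    intro m
    calc muStar Ω μ (S ∆ L) ≤ muStar Ω μ (⋃ k, (B (f (m + k)) ∆ S)) :=
          muStar_mono Ω μ (hsub m)
      _ ≤ ∑' k, muStar Ω μ (B (f (m + k)) ∆ S) := muStar_iUnion_le Ω μ hem hmuem _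
      _ ≤ ∑' k : ℕ, (2 : ℝ≥0∞)⁻¹ ^ (m + k) := ENNReal.tsum_le_tsum fun k => hfb (m + k)
      _ = (2 : ℝ≥0∞)⁻¹ ^ m * 2 := by
          simp only [pow_add, ENNReal.tsum_mul_left, ENNReal.tsum_geometric,
            ENNReal.one_sub_inv_two, inv_inv]
  have htend : Tendsto (fun m : ℕ => (2 : ℝ≥0∞)⁻¹ ^ m * 2) atTop (𝓝 0) := by
    have h1 : Tendsto (fun m : ℕ => (2 : ℝ≥0∞)⁻¹ ^ m) atTop (𝓝 0) :=
      ENNReal.tendsto_pow_atTop_nhds_zero_of_lt_one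
        (ENNReal.inv_lt_one.mpr ENNReal.one_lt_two)
    simpa using ENNReal.Tendsto.mul_const h1 (Or.inr ENNReal.ofNat_ne_top)
  have hzero : muStar Ω μ (S ∆ L) = 0 :=
    le_antisymm (ge_of_tendsto' htend hbound) zero_le
  refine ⟨B, f, hB, hfs, hfgt, ?_, hzero⟩
  rw [ENNReal.tendsto_nhds_zero]
  intro ε hε
  filter_upwards [ENNReal.tendsto_nhds_zero.mp hBS ε hε] with n hn
  calc muStar Ω μ (B n ∆ L) ≤ muStar Ω μ ((B n ∆ S) ∪ (S ∆ L)) :=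
        muStar_mono Ω μ (symmDiff_triangle (B n) S L)
    _ ≤ muStar Ω μ (B n ∆ S) + muStar Ω μ (S ∆ L) := muStar_union_le Ω μ hem hmuem _ _
    _ = muStar Ω μ (B n ∆ S) := by rw [hzero, add_zero]
    _ ≤ ε := hn
end
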